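/- Suppose for each level ℓ = 0,…,L there are independent estimators Ŷ_ℓ with E[Ŷ_0] = E[P̂_0], E[Ŷ_ℓ] = E[P̂_ℓ − P̂_{ℓ−1}] for ℓ > 0, and there exist constants c₁, c₂ > 0, α ≥ 1/2, β > 1 such that |E[P̂_ℓ − P]| ≤ c₁ h_ℓ^α and Var[Ŷ_ℓ] ≤ c₂ N_ℓ^{−1} h_ℓ^β, with cost of Ŷ_ℓ bounded by c₃ N_ℓ h_ℓ^{−1}. Then there is a constant c₄ such that for every ε < e^{−1} one can choose L and N_ℓ so that the combined estimator Ŷ = Σ_{ℓ=0}^{L} Ŷ_ℓ satisfies E[(Ŷ − E[P])²] < ε² with total computational cost at most c₄ ε^{−2}. -/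

import Mathlib

open MeasureTheory ProbabilityTheory

lemma mse_decomp {Ω : Type*} [MeasurableSpace Ω] (μ : Measure Ω) [IsProbabilityMeasure μ]
    (X : Ω → ℝ) (hX : MemLp X 2 μ) (c : ℝ) :
    ∫ ω, (X ω - c) ^ 2 ∂μ = variance X μ + ((∫ ω, X ω ∂μ) - c) ^ 2 := by
  have hXi : Integrable X μ := hX.integrable one_le_two
  have hX2 : Integrable (fun ω => X ω ^ 2) μ := hX.integrable_sq
  have hv : variance X μ = (∫ ω, X ω ^ 2 ∂μ) - (∫ ω, X ω ∂μ) ^ 2 := by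
    rw [variance_eq_sub hX]; simp [sq]
  calc ∫ ω, (X ω - c) ^ 2 ∂μ
      = ∫ ω, (X ω ^ 2 - (2 * c) * X ω + c ^ 2) ∂μ := by
        congr 1; funext ω; ring
    _ = (∫ ω, X ω ^ 2 ∂μ) - (2 * c) * (∫ ω, X ω ∂μ) + c ^ 2 := by
        have hI1 : Integrable (fun ω => X ω ^ 2 - 2 * c * X ω) μ := hX2.sub (hXi.const_mul _)
        rw [integral_add hI1 (integrable_const _),
          integral_sub hX2 (hXi.const_mul _), integral_const_mul, integral_const]
        simp
    _ = variance X μ + ((∫ ω, X ω ∂μ) - c) ^ 2 := by rw [hv]; ring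

/-- Multilevel Monte Carlo complexity theorem, case `β > 1`:
with bias `|E[P̂_ℓ − P]| ≤ c₁ h_ℓ^α` (`α ≥ 1/2`), independent unbiased level estimators
`Ŷ_ℓ` based on `N_ℓ` samples with `Var[Ŷ_ℓ] ≤ c₂ N_ℓ⁻¹ h_ℓ^β` (`β > 1`), and level cost
`c₃ N_ℓ h_ℓ⁻¹`, there is `c₄` such that for every `ε < e⁻¹` one can choose `L` and `N_ℓ`
so that the combined estimator has mean square error below `ε²` at total cost `≤ c₄ ε⁻²`. -/
theorem mlmc_complexity_beta_gt_one
    {Ω : Type*} [MeasurableSpace Ω] (μ : Measure Ω) [IsProbabilityMeasure μ]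
    (T : ℝ) (hT : 0 < T)
    (P : Ω → ℝ) (hPint : Integrable P μ)
    (Phat : ℕ → Ω → ℝ) (hPhatint : ∀ ℓ, Integrable (Phat ℓ) μ)
    (Y : ℕ → ℕ → Ω → ℝ)   -- `Y ℓ N` : the estimator `Ŷ_ℓ` built from `N` samples
    (h : ℕ → ℝ) (hh : ∀ ℓ, h ℓ = T / 2 ^ ℓ)
    (c₁ c₂ c₃ α β : ℝ) (hc₁ : 0 < c₁) (hc₂ : 0 < c₂) (hc₃ : 0 < c₃)
    (hα : (1:ℝ)/2 ≤ α) (hβ : 1 < β)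
    (hYint : ∀ ℓ N, MemLp (Y ℓ N) 2 μ)
    (hindep : ∀ N : ℕ → ℕ, iIndepFun (fun ℓ => Y ℓ (N ℓ)) μ)
    (hbias : ∀ ℓ, |(∫ ω, Phat ℓ ω ∂μ) - ∫ ω, P ω ∂μ| ≤ c₁ * h ℓ ^ α)
    (hmean0 : ∀ N, ∫ ω, Y 0 N ω ∂μ = ∫ ω, Phat 0 ω ∂μ)
    (hmean : ∀ ℓ N, 1 ≤ ℓ → ∫ ω, Y ℓ N ω ∂μ = ∫ ω, (Phat ℓ ω - Phat (ℓ - 1) ω) ∂μ)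
    (hvar : ∀ ℓ N, 0 < N → variance (Y ℓ N) μ ≤ c₂ * (N : ℝ)⁻¹ * h ℓ ^ β) :
    ∃ c₄ : ℝ, 0 < c₄ ∧ ∀ ε : ℝ, 0 < ε → ε < Real.exp (-1) →
      ∃ (L : ℕ) (N : ℕ → ℕ), (∀ ℓ ≤ L, 0 < N ℓ) ∧
        (∫ ω, ((∑ ℓ ∈ Finset.range (L + 1), Y ℓ (N ℓ) ω) - ∫ ω', P ω' ∂μ) ^ 2 ∂μ < ε ^ 2) ∧
        ∑ ℓ ∈ Finset.range (L + 1), c₃ * (N ℓ : ℝ) * (h ℓ)⁻¹ ≤ c₄ * ε ^ (-2 : ℝ) := by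
  have hαpos : (0:ℝ) < α := lt_of_lt_of_le (by norm_num) hα
  have hbpos : (0:ℝ) < (β - 1) / 2 := by linarith
  set b : ℝ := (β - 1) / 2 with hbdef
  set r : ℝ := (2:ℝ) ^ (-b) with hrdef
  have hr0 : 0 < r := Real.rpow_pos_of_pos two_pos _
  have hr1 : r < 1 := Real.rpow_lt_one_of_one_lt_of_neg one_lt_two (by linarith)
  set S : ℝ := (1 - r)⁻¹ with hSdef
  have hS0 : 0 < S := inv_pos.2 (by linarith)
  have hTb : (0:ℝ) < T ^ b := Real.rpow_pos_of_pos hT _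
  set K : ℝ := 2 * c₂ * T ^ b * S with hKdef
  have hK0 : 0 < K := by positivity
  set C₀ : ℝ := (2 * c₁ * T ^ α) ^ α⁻¹ with hC₀def
  have hC₀0 : 0 < C₀ := Real.rpow_pos_of_pos (by positivity) _
  have hhpos : ∀ ℓ, 0 < h ℓ := fun ℓ => by rw [hh]; positivity
  -- geometric sum bound
  have hgeom : ∀ n : ℕ, ∑ ℓ ∈ Finset.range n, r ^ ℓ ≤ S := by
    intro n
    rw [geom_sum_eq hr1.ne n]
    have h1 : (0:ℝ) < 1 - r := by linarith
    have : (r ^ n - 1) / (r - 1) = (1 - r ^ n) / (1 - r) := by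
      rw [← neg_div_neg_eq]; ring_nf
    rw [this, hSdef, ← one_div]
    exact (div_le_div_iff_of_pos_right h1).2 (by linarith [pow_nonneg hr0.le n])
  -- h ℓ ^ e  in terms of powers of 2
  have hpow2 : ∀ (ℓ : ℕ) (e : ℝ), h ℓ ^ e = T ^ e * ((2:ℝ) ^ (-e)) ^ ℓ := by
    intro ℓ e
    rw [hh, Real.div_rpow hT.le (by positivity)]
    rw [← Real.rpow_natCast (2:ℝ) ℓ, ← Real.rpow_mul (by norm_num),
      ← Real.rpow_natCast ((2:ℝ) ^ (-e)) ℓ, ← Real.rpow_mul (by norm_num),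
      div_eq_mul_inv, ← Real.rpow_neg (by norm_num)]
    ring_nf
  refine ⟨c₃ * K * T ^ b * S + 4 * c₃ * (C₀ + 1) / T, by positivity, ?_⟩
  intro ε hε hεe
  have hε1 : ε < 1 := hεe.trans (by
    rw [Real.exp_neg]
    exact inv_lt_one_of_one_lt₀ (by linarith [Real.add_one_le_exp 1]))
  have hεn2 : ε ^ (-2:ℝ) = (ε ^ 2)⁻¹ := by
    rw [show ((-2:ℝ)) = -((2:ℕ):ℝ) by norm_num, Real.rpow_neg hε.le, Real.rpow_natCast]
  have hεn2pos : 0 < ε ^ (-2:ℝ) := by rw [hεn2]; positivity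
  have hone_le : (1:ℝ) ≤ ε ^ (-2:ℝ) := by
    rw [hεn2]
    have h2 : ε ^ 2 ≤ 1 := by nlinarith
    simpa using inv_anti₀ (pow_pos hε 2) h2
  -- level count
  set A : ℝ := (2 * c₁ * T ^ α / ε) ^ α⁻¹ with hAdef
  have hA0 : 0 < A := Real.rpow_pos_of_pos (by positivity) _
  set L : ℕ := ⌈Real.logb 2 A⌉₊ with hLdef
  have h2L : A ≤ (2:ℝ) ^ L := by
    rcases le_or_gt A 1 with hA1 | hA1
    · exact hA1.trans (one_le_pow₀ one_le_two)
    · have hlb : Real.logb 2 A ≤ (L:ℝ) := Nat.le_ceil _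
      calc A = (2:ℝ) ^ Real.logb 2 A := (Real.rpow_logb two_pos (by norm_num) hA0).symm
        _ ≤ (2:ℝ) ^ (L:ℝ) := Real.rpow_le_rpow_of_exponent_le one_le_two hlb
        _ = (2:ℝ) ^ L := Real.rpow_natCast 2 L
  have h2L' : (2:ℝ) ^ L ≤ 2 * max A 1 := by
    rcases le_or_gt A 1 with hA1 | hA1
    · have hL0 : L = 0 := by
        rw [hLdef, Nat.ceil_eq_zero]
        exact Real.logb_nonpos one_lt_two hA0.le hA1
      rw [hL0, pow_zero]
      have : (1:ℝ) ≤ max A 1 := le_max_right _ _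
      linarith
    · have hlb : (0:ℝ) ≤ Real.logb 2 A := Real.logb_nonneg one_lt_two hA1.le
      have hc : (L:ℝ) < Real.logb 2 A + 1 := Nat.ceil_lt_add_one hlb
      calc (2:ℝ) ^ L = (2:ℝ) ^ (L:ℝ) := (Real.rpow_natCast 2 L).symm
        _ ≤ (2:ℝ) ^ (Real.logb 2 A + 1) := Real.rpow_le_rpow_of_exponent_le one_le_two hc.le
        _ = A * 2 := by rw [Real.rpow_add two_pos, Real.rpow_one, Real.rpow_logb two_pos (by norm_num) hA0]
        _ ≤ 2 * max A 1 := by rw [mul_comm]; gcongr; exact le_max_left _ _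
  -- sample sizes
  set x : ℕ → ℝ := fun ℓ => K * ε ^ (-2:ℝ) * h ℓ ^ ((β + 1) / 2) with hxdef
  have hxpos : ∀ ℓ, 0 < x ℓ := fun ℓ => by
    have := Real.rpow_pos_of_pos (hhpos ℓ) ((β + 1) / 2); positivity
  have hxval : ∀ ℓ, x ℓ = K * ε ^ (-2:ℝ) * h ℓ ^ ((β + 1) / 2) := fun ℓ => rfl
  set N : ℕ → ℕ := fun ℓ => ⌈x ℓ⌉₊ with hNdef
  have hNpos : ∀ ℓ, 0 < N ℓ := fun ℓ => Nat.ceil_pos.2 (hxpos ℓ)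
  have hαinv2 : α⁻¹ ≤ 2 := by
    calc α⁻¹ ≤ ((1:ℝ)/2)⁻¹ := inv_anti₀ (by norm_num) hα
      _ = 2 := by norm_num
  refine ⟨L, N, fun ℓ _ => hNpos ℓ, ?_, ?_⟩
  · -- MSE bound
    set X : Ω → ℝ := ∑ ℓ ∈ Finset.range (L + 1), Y ℓ (N ℓ) with hXdef
    have hXapp : ∀ ω, X ω = ∑ ℓ ∈ Finset.range (L + 1), Y ℓ (N ℓ) ω := fun ω => by
      rw [hXdef]; simp [Finset.sum_apply]
    have hX2 : MemLp X 2 μ := memLp_finset_sum' _ (fun i _ => hYint i (N i))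
    have hmse := mse_decomp μ X hX2 (∫ ω', P ω' ∂μ)
    have htel : ∀ M : ℕ, ∑ ℓ ∈ Finset.range (M + 1), ∫ ω, Y ℓ (N ℓ) ω ∂μ
        = ∫ ω, Phat M ω ∂μ := by
      intro M
      induction M with
      | zero => simpa using hmean0 (N 0)
      | succ M ih =>
        rw [Finset.sum_range_succ, ih, hmean (M + 1) (N (M + 1)) (by omega),
          integral_sub (hPhatint _) (hPhatint _)]
        simp
    have hmeanX : ∫ ω, X ω ∂μ = ∫ ω, Phat L ω ∂μ := by
      have : ∫ ω, X ω ∂μ = ∑ ℓ ∈ Finset.range (L + 1), ∫ ω, Y ℓ (N ℓ) ω ∂μ := by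
        simp_rw [hXapp]
        exact integral_finset_sum _ (fun i _ => (hYint i (N i)).integrable one_le_two)
      rw [this, htel]
    have hVar : variance X μ ≤ ε ^ 2 / 2 := by
      rw [hXdef, IndepFun.variance_sum (fun i _ => hYint i (N i))
        (fun i _ j _ hij => (hindep N).indepFun hij)]
      calc ∑ ℓ ∈ Finset.range (L + 1), variance (Y ℓ (N ℓ)) μ
          ≤ ∑ ℓ ∈ Finset.range (L + 1), c₂ / K * ε ^ 2 * T ^ b * r ^ ℓ := by
            apply Finset.sum_le_sum
            intro ℓ _
            have h1 := hvar ℓ (N ℓ) (hNpos ℓ)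
            have hxle : x ℓ ≤ (N ℓ : ℝ) := Nat.le_ceil _
            have h2 : ((N ℓ : ℝ))⁻¹ ≤ (x ℓ)⁻¹ := inv_anti₀ (hxpos ℓ) hxle
            have h3 : variance (Y ℓ (N ℓ)) μ ≤ c₂ * (x ℓ)⁻¹ * h ℓ ^ β :=
              h1.trans (mul_le_mul_of_nonneg_right (mul_le_mul_of_nonneg_left h2 hc₂.le)
                (Real.rpow_pos_of_pos (hhpos ℓ) β).le)
            refine h3.trans_eq ?_
            have hsplit : h ℓ ^ β = h ℓ ^ ((β + 1) / 2) * h ℓ ^ b := by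
              rw [← Real.rpow_add (hhpos ℓ)]
              congr 1
              rw [hbdef]; ring
            have hHpos : 0 < h ℓ ^ ((β + 1) / 2) := Real.rpow_pos_of_pos (hhpos ℓ) _
            rw [hsplit, hpow2 ℓ b, ← hrdef, hxval ℓ, hεn2]
            have hε2 : (0:ℝ) < ε ^ 2 := pow_pos hε 2
            field_simp
        _ = c₂ / K * ε ^ 2 * T ^ b * ∑ ℓ ∈ Finset.range (L + 1), r ^ ℓ := by
            rw [Finset.mul_sum]
        _ ≤ c₂ / K * ε ^ 2 * T ^ b * S :=
            mul_le_mul_of_nonneg_left (hgeom _) (by positivity)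
        _ = ε ^ 2 / 2 := by
            rw [hKdef]; field_simp
    have hbiasL : |(∫ ω, Phat L ω ∂μ) - ∫ ω', P ω' ∂μ| ≤ ε / 2 := by
      refine (hbias L).trans ?_
      have h1 : h L ≤ T / A := by
        rw [hh]; exact div_le_div_of_nonneg_left hT.le hA0 h2L
      have h2 : h L ^ α ≤ (T / A) ^ α := Real.rpow_le_rpow (hhpos L).le h1 hαpos.le
      have h3 : (T / A) ^ α = ε / (2 * c₁) := by
        rw [Real.div_rpow hT.le hA0.le, hAdef, Real.rpow_inv_rpow (by positivity) hαpos.ne']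
        rw [div_div_eq_mul_div, div_eq_div_iff (by positivity) (by positivity)]
        ring
      calc c₁ * h L ^ α ≤ c₁ * (ε / (2 * c₁)) := by
            rw [← h3]; exact mul_le_mul_of_nonneg_left h2 hc₁.le
        _ = ε / 2 := by field_simp
    have hgoalEq : ∫ ω, ((∑ ℓ ∈ Finset.range (L + 1), Y ℓ (N ℓ) ω) - ∫ ω', P ω' ∂μ) ^ 2 ∂μ
        = variance X μ + ((∫ ω, Phat L ω ∂μ) - ∫ ω', P ω' ∂μ) ^ 2 := by
      rw [← hmeanX, ← hmse]
      congr 1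
      funext ω
      rw [hXapp]
    rw [hgoalEq]
    have hb2 : ((∫ ω, Phat L ω ∂μ) - ∫ ω', P ω' ∂μ) ^ 2 ≤ (ε / 2) ^ 2 := by
      rw [← sq_abs]
      exact pow_le_pow_left₀ (abs_nonneg _) hbiasL 2
    have h9 : (ε / 2) ^ 2 = ε ^ 2 / 4 := by ring
    have h10 : (0:ℝ) < ε ^ 2 := pow_pos hε 2
    linarith
  · -- cost bound
    have hxh : ∀ ℓ, x ℓ * (h ℓ)⁻¹ = K * ε ^ (-2:ℝ) * T ^ b * r ^ ℓ := by
      intro ℓ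
      have hinv : (h ℓ)⁻¹ = h ℓ ^ (-1:ℝ) := (Real.rpow_neg_one _).symm
      have he : (β + 1) / 2 + (-1) = b := by rw [hbdef]; ring
      rw [hxval ℓ, hinv, mul_assoc, ← Real.rpow_add (hhpos ℓ), he, hpow2 ℓ b, ← hrdef]
      ring
    have hhi : ∀ ℓ, (h ℓ)⁻¹ = (2:ℝ) ^ ℓ / T := by
      intro ℓ; rw [hh]; field_simp
    have hmax : max A 1 ≤ (C₀ + 1) * ε ^ (-2:ℝ) := by
      apply max_le
      · have hAeq : A = C₀ * (ε ^ (α⁻¹:ℝ))⁻¹ := by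
          rw [hAdef, hC₀def, div_eq_mul_inv,
            Real.mul_rpow (by positivity) (by positivity), Real.inv_rpow hε.le]
        rw [hAeq]
        have h4 : ε ^ (2:ℝ) ≤ ε ^ (α⁻¹:ℝ) :=
          Real.rpow_le_rpow_of_exponent_ge hε hε1.le hαinv2
        have h5 : (ε ^ (α⁻¹:ℝ))⁻¹ ≤ (ε ^ (2:ℝ))⁻¹ :=
          inv_anti₀ (Real.rpow_pos_of_pos hε 2) h4
        have h6 : (ε ^ (2:ℝ))⁻¹ = ε ^ (-2:ℝ) := by
          rw [← Real.rpow_neg hε.le]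
        calc C₀ * (ε ^ (α⁻¹:ℝ))⁻¹ ≤ C₀ * ε ^ (-2:ℝ) :=
              mul_le_mul_of_nonneg_left (h5.trans_eq h6) hC₀0.le
          _ ≤ (C₀ + 1) * ε ^ (-2:ℝ) :=
              mul_le_mul_of_nonneg_right (by linarith) hεn2pos.le
      · calc (1:ℝ) ≤ ε ^ (-2:ℝ) := hone_le
          _ ≤ (C₀ + 1) * ε ^ (-2:ℝ) :=
              le_mul_of_one_le_left hεn2pos.le (by linarith)
    have h7 : (2:ℝ) ^ L ≤ 2 * ((C₀ + 1) * ε ^ (-2:ℝ)) :=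
      h2L'.trans (mul_le_mul_of_nonneg_left hmax (by norm_num))
    calc ∑ ℓ ∈ Finset.range (L + 1), c₃ * (N ℓ : ℝ) * (h ℓ)⁻¹
        ≤ ∑ ℓ ∈ Finset.range (L + 1), (c₃ * (x ℓ * (h ℓ)⁻¹) + c₃ * (h ℓ)⁻¹) := by
          apply Finset.sum_le_sum
          intro ℓ _
          have hNle : (N ℓ : ℝ) ≤ x ℓ + 1 := (Nat.ceil_lt_add_one (hxpos ℓ).le).le
          have hinv : (0:ℝ) < (h ℓ)⁻¹ := inv_pos.2 (hhpos ℓ)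
          have hstep : c₃ * (N ℓ : ℝ) * (h ℓ)⁻¹ ≤ c₃ * (x ℓ + 1) * (h ℓ)⁻¹ :=
            mul_le_mul_of_nonneg_right (mul_le_mul_of_nonneg_left hNle hc₃.le) hinv.le
          exact hstep.trans_eq (by ring)
      _ = c₃ * ∑ ℓ ∈ Finset.range (L + 1), x ℓ * (h ℓ)⁻¹
          + c₃ * ∑ ℓ ∈ Finset.range (L + 1), (h ℓ)⁻¹ := by
          rw [Finset.sum_add_distrib, Finset.mul_sum, Finset.mul_sum]
      _ ≤ c₃ * (K * ε ^ (-2:ℝ) * T ^ b * S) + c₃ * (2 * (2:ℝ) ^ L / T) := by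
          gcongr
          · calc ∑ ℓ ∈ Finset.range (L + 1), x ℓ * (h ℓ)⁻¹
                = K * ε ^ (-2:ℝ) * T ^ b * ∑ ℓ ∈ Finset.range (L + 1), r ^ ℓ := by
                  simp_rw [hxh]; rw [Finset.mul_sum]
              _ ≤ K * ε ^ (-2:ℝ) * T ^ b * S :=
                  mul_le_mul_of_nonneg_left (hgeom _) (by positivity)
          · calc ∑ ℓ ∈ Finset.range (L + 1), (h ℓ)⁻¹
                = (∑ ℓ ∈ Finset.range (L + 1), (2:ℝ) ^ ℓ) / T := by
                  simp_rw [hhi]; rw [Finset.sum_div]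
              _ ≤ (2 * (2:ℝ) ^ L) / T := by
                  apply div_le_div_of_nonneg_right ?_ hT.le
                  have h2Lpos : (0:ℝ) < 2 ^ L := by positivity
                  rw [geom_sum_eq (by norm_num : (2:ℝ) ≠ 1) (L + 1), pow_succ]
                  norm_num
                  linarith
              _ = 2 * (2:ℝ) ^ L / T := rfl
      _ ≤ (c₃ * K * T ^ b * S + 4 * c₃ * (C₀ + 1) / T) * ε ^ (-2:ℝ) := by
          have h8 : c₃ * (2 * (2:ℝ) ^ L / T) ≤ 4 * c₃ * (C₀ + 1) / T * ε ^ (-2:ℝ) := by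
            rw [show c₃ * (2 * (2:ℝ) ^ L / T) = c₃ * 2 * (2:ℝ) ^ L / T by ring,
              show 4 * c₃ * (C₀ + 1) / T * ε ^ (-2:ℝ)
                = c₃ * 2 * (2 * ((C₀ + 1) * ε ^ (-2:ℝ))) / T by ring]
            exact div_le_div_of_nonneg_right
              (mul_le_mul_of_nonneg_left h7 (by positivity)) hT.le
          linarith [h8]
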